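/- Let u, w ∈ ℝ^d with 1 + uᵀw > 0, and define f₁(z) = z + ReLU(wᵀz)·u and f₂(z) = z − ReLU(−wᵀz)·u. Then f₂ ∘ f₁ is the linear map z ↦ (I + uwᵀ)z. Consequently, any rank-one modification I + uwᵀ of the identity with positive determinant is a composition of two ReLU planar flows. -/

import Mathlib

open Matrix

/-- Two ReLU planar flows compose to the rank-one modification `I + uwᵀ` of the
identity (assuming `1 + uᵀw > 0`). -/
theorem relu_planar_flows_compose_to_rank_one {d : ℕ}
    (u w : Fin d → ℝ) (huw : 0 < 1 + u ⬝ᵥ w)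
    (f₁ f₂ : (Fin d → ℝ) → (Fin d → ℝ))
    (hf₁ : ∀ z, f₁ z = z + max (w ⬝ᵥ z) 0 • u)
    (hf₂ : ∀ z, f₂ z = z - max (-(w ⬝ᵥ z)) 0 • u) :
    (∀ z, f₂ (f₁ z) = (1 + vecMulVec u w).mulVec z) ∧
      (1 + vecMulVec u w).det = 1 + u ⬝ᵥ w := by
  have hM : ∀ z, (1 + vecMulVec u w).mulVec z = z + (w ⬝ᵥ z) • u := by
    intro z
    funext i
    simp only [add_mulVec, one_mulVec, Pi.add_apply, Pi.smul_apply, smul_eq_mul]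
    congr 1
    simp [vecMulVec, mulVec, dotProduct, Finset.mul_sum, mul_comm, mul_left_comm]
  constructor
  · intro z
    rw [hf₁, hf₂, hM]
    rcases le_or_gt 0 (w ⬝ᵥ z) with h | h
    · have h1 : max (w ⬝ᵥ z) 0 = w ⬝ᵥ z := max_eq_left h
      rw [h1]
      have h2 : w ⬝ᵥ (z + (w ⬝ᵥ z) • u) = (w ⬝ᵥ z) * (1 + u ⬝ᵥ w) := by
        rw [dotProduct_add, dotProduct_smul, smul_eq_mul, dotProduct_comm w u]
        ring
      have h3 : max (-(w ⬝ᵥ (z + (w ⬝ᵥ z) • u))) 0 = 0 := by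
        rw [h2, max_eq_right]
        nlinarith
      rw [h3, zero_smul, sub_zero]
    · have h1 : max (w ⬝ᵥ z) 0 = 0 := max_eq_right h.le
      rw [h1, zero_smul, add_zero]
      have h3 : max (-(w ⬝ᵥ z)) 0 = -(w ⬝ᵥ z) := max_eq_left (by linarith)
      rw [h3, neg_smul, sub_neg_eq_add]
  · rw [vecMulVec_eq (Fin 1), det_one_add_replicateCol_mul_replicateRow, dotProduct_comm]
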